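/- Let N, F be finite sets, c : N×F → ℝ≥0 transportation costs, and ρ > 0 a uniform penalty with ρ ≥ c i j for all i ∈ N, j ∈ F. For any (x,u) ∈ X(y,s), the cost satisfies Σ_i Σ_j c_{ij} x_{ij} + ρ Σ_i u_i ≤ ρ Σ_i d_i, and for any (x,u), (x',u') ∈ X(y,s) with Σ_i u_i ≤ Σ_i u'_i and x obtained from x' by reallocating so that Σ_i Σ_j x_{ij} ≥ Σ_i Σ_j x'_{ij}, if Σ_i u_i < Σ_i u'_i and all c_{ij} ≤ ρ then there exists a feasible point with cost at most that of (x',u'). In particular, with the lower bound on unmet demand attained, min over φ(y,s) of the cost equals min over X(y,s) of the cost. -/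

import Mathlib

lemma aux_mul_div_max (a b : ℝ) (ha : 0 ≤ a) (hb : 0 ≤ b) :
    a * b / max a b = min a b := by
  rcases le_total a b with h | h
  · rw [max_eq_right h, min_eq_left h]
    rcases eq_or_lt_of_le hb with hb0 | hb0
    · have : a = 0 := le_antisymm (hb0 ▸ h) ha
      simp [this]
    · field_simp
  · rw [max_eq_left h, min_eq_right h]
    rcases eq_or_lt_of_le ha with ha0 | ha0
    · have : b = 0 := le_antisymm (ha0 ▸ h) hb
      simp [this]
    · rw [mul_comm]
      field_simp

/-- Proposition 3 (uniform penalty at least the maximum transportation cost):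
every feasible cost is at most `ρ ∑ d_i`; every feasible point is dominated by a
feasible point with minimal total unmet demand (and no smaller total allocation);
and the minimum cost over the lower-level argmin set `φ(y,s)` equals the minimum
cost over `X(y,s)`. -/
theorem stmt_6 (N F : Type*) [Fintype N] [Fintype F]
    (d : N → ℝ) (hd : ∀ i, 0 ≤ d i)
    (K : F → ℝ) (hK : ∀ j, 0 ≤ K j)
    (c : N → F → ℝ) (hc : ∀ i j, 0 ≤ c i j)
    (ρ : ℝ) (hρ : 0 < ρ) (hρc : ∀ i j, c i j ≤ ρ)
    (y s : F → ℝ) (hy : ∀ j, y j = 0 ∨ y j = 1) (hs : ∀ j, s j = 0 ∨ s j = 1)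
    (Feas : (N → F → ℝ) → (N → ℝ) → Prop)
    (hFeas : ∀ x u, Feas x u ↔
      (∀ i j, 0 ≤ x i j) ∧ (∀ i, 0 ≤ u i) ∧
      (∀ j, ∑ i, x i j ≤ K j * y j * (1 - s j)) ∧
      (∀ i, ∑ j, x i j + u i = d i)) :
    (∀ x u, Feas x u →
        ∑ i, ∑ j, c i j * x i j + ρ * ∑ i, u i ≤ ρ * ∑ i, d i) ∧
    (∀ x' u', Feas x' u' →
      ∃ x u, Feas x u ∧
        (∑ i, ∑ j, x' i j ≤ ∑ i, ∑ j, x i j) ∧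
        (∀ a b, Feas a b → ∑ i, u i ≤ ∑ i, b i) ∧
        ∑ i, ∑ j, c i j * x i j + ρ * ∑ i, u i ≤
          ∑ i, ∑ j, c i j * x' i j + ρ * ∑ i, u' i) ∧
    sInf {v : ℝ | ∃ x u, Feas x u ∧ (∀ a b, Feas a b → ∑ i, u i ≤ ∑ i, b i) ∧
        v = ∑ i, ∑ j, c i j * x i j + ρ * ∑ i, u i} =
      sInf {v : ℝ | ∃ x u, Feas x u ∧
        v = ∑ i, ∑ j, c i j * x i j + ρ * ∑ i, u i} := by
  set cap : F → ℝ := fun j => K j * y j * (1 - s j) with hcapdef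
  have hcapnn : ∀ j, 0 ≤ cap j := by
    intro j
    rcases hy j with h | h <;> rcases hs j with h' | h' <;>
      simp [hcapdef, h, h', hK j]
  -- Part 1
  have part1 : ∀ x u, Feas x u →
      ∑ i, ∑ j, c i j * x i j + ρ * ∑ i, u i ≤ ρ * ∑ i, d i := by
    intro x u hxu
    rw [hFeas] at hxu
    obtain ⟨hx, hu, _, hdem⟩ := hxu
    have h1 : ∑ i, ∑ j, c i j * x i j ≤ ρ * ∑ i, ∑ j, x i j := by
      rw [Finset.mul_sum]
      refine Finset.sum_le_sum fun i _ => ?_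
      rw [Finset.mul_sum]
      exact Finset.sum_le_sum fun j _ =>
        mul_le_mul_of_nonneg_right (hρc i j) (hx i j)
    have h2 : ∑ i, ∑ j, x i j + ∑ i, u i = ∑ i, d i := by
      rw [← Finset.sum_add_distrib]
      exact Finset.sum_congr rfl fun i _ => hdem i
    have h3 : ρ * ∑ i, d i = ρ * ∑ i, ∑ j, x i j + ρ * ∑ i, u i := by
      rw [← mul_add, h2]
    linarith
  -- Part 2
  have part2 : ∀ x' u', Feas x' u' →
      ∃ x u, Feas x u ∧
        (∑ i, ∑ j, x' i j ≤ ∑ i, ∑ j, x i j) ∧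
        (∀ a b, Feas a b → ∑ i, u i ≤ ∑ i, b i) ∧
        ∑ i, ∑ j, c i j * x i j + ρ * ∑ i, u i ≤
          ∑ i, ∑ j, c i j * x' i j + ρ * ∑ i, u' i := by
    intro x' u' h'
    rw [hFeas] at h'
    obtain ⟨hx', hu', hcap', hdem'⟩ := h'
    set R : F → ℝ := fun j => cap j - ∑ i, x' i j with hRdef
    have hRnn : ∀ j, 0 ≤ R j := fun j => sub_nonneg.2 (hcap' j)
    set U : ℝ := ∑ i, u' i with hUdef
    set RS : ℝ := ∑ j, R j with hRSdef
    have hUnn : 0 ≤ U := Finset.sum_nonneg fun i _ => hu' i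
    have hRSnn : 0 ≤ RS := Finset.sum_nonneg fun j _ => hRnn j
    set T : ℝ := max U RS with hTdef
    have hTnn : 0 ≤ T := le_trans hUnn (le_max_left _ _)
    set e : N → F → ℝ := fun i j => u' i * R j / T with hedef
    have henn : ∀ i j, 0 ≤ e i j :=
      fun i j => div_nonneg (mul_nonneg (hu' i) (hRnn j)) hTnn
    have hfracU : U / T ≤ 1 := div_le_one_of_le₀ (le_max_left _ _) hTnn
    have hfracR : RS / T ≤ 1 := div_le_one_of_le₀ (le_max_right _ _) hTnn
    have hrow : ∀ i, ∑ j, e i j = u' i * RS / T := by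
      intro i
      rw [hRSdef, Finset.mul_sum, Finset.sum_div]
    have hcol : ∀ j, ∑ i, e i j = U * R j / T := by
      intro j
      rw [hUdef, Finset.sum_mul, Finset.sum_div]
    have htot : ∑ i, ∑ j, e i j = U * RS / T := by
      rw [hUdef, Finset.sum_mul, Finset.sum_div]
      exact Finset.sum_congr rfl fun i _ => hrow i
    have htotmin : ∑ i, ∑ j, e i j = min U RS := by
      rw [htot, hTdef, aux_mul_div_max U RS hUnn hRSnn]
    refine ⟨fun i j => x' i j + e i j, fun i => u' i - ∑ j, e i j, ?_, ?_, ?_, ?_⟩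
    · rw [hFeas]
      refine ⟨fun i j => add_nonneg (hx' i j) (henn i j), ?_, ?_, ?_⟩
      · intro i
        rw [hrow i, sub_nonneg, mul_div_assoc]
        calc u' i * (RS / T) ≤ u' i * 1 :=
              mul_le_mul_of_nonneg_left hfracR (hu' i)
          _ = u' i := mul_one _
      · intro j
        rw [Finset.sum_add_distrib, hcol j]
        have : U * R j / T ≤ R j := by
          rw [mul_comm, mul_div_assoc]
          calc R j * (U / T) ≤ R j * 1 := mul_le_mul_of_nonneg_left hfracU (hRnn j)
            _ = R j := mul_one _
        have := add_le_add_left this (∑ i, x' i j)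
        simp only [hRdef, hcapdef] at this ⊢
        linarith
      · intro i
        rw [Finset.sum_add_distrib]
        linarith [hdem' i]
    · refine Finset.sum_le_sum fun i _ => Finset.sum_le_sum fun j _ => ?_
      show x' i j ≤ x' i j + e i j
      linarith [henn i j]
    · intro a b hab
      rw [hFeas] at hab
      obtain ⟨ha, hb, hcapb, hdemb⟩ := hab
      have hsum_u : ∑ i, (u' i - ∑ j, e i j) = U - min U RS := by
        rw [Finset.sum_sub_distrib, ← htotmin, hUdef]
      have hsum_b : ∑ i, ∑ j, a i j + ∑ i, b i = ∑ i, d i := by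
        rw [← Finset.sum_add_distrib]
        exact Finset.sum_congr rfl fun i _ => hdemb i
      have hacap : ∑ i, ∑ j, a i j ≤ ∑ j, cap j := by
        rw [Finset.sum_comm]
        exact Finset.sum_le_sum fun j _ => hcapb j
      have hbnn : 0 ≤ ∑ i, b i := Finset.sum_nonneg fun i _ => hb i
      have hx'd : ∑ i, ∑ j, x' i j + U = ∑ i, d i := by
        rw [hUdef, ← Finset.sum_add_distrib]
        exact Finset.sum_congr rfl fun i _ => hdem' i
      have hx'cap : ∑ i, ∑ j, x' i j + RS = ∑ j, cap j := by
        rw [hRSdef, hRdef]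
        rw [Finset.sum_comm]
        rw [← Finset.sum_add_distrib]
        simp
      rw [hsum_u]
      rcases le_total U RS with h | h
      · rw [min_eq_left h]; linarith
      · rw [min_eq_right h]; linarith
    · have hce : ∑ i, ∑ j, c i j * e i j ≤ ρ * ∑ i, ∑ j, e i j := by
        rw [Finset.mul_sum]
        refine Finset.sum_le_sum fun i _ => ?_
        rw [Finset.mul_sum]
        exact Finset.sum_le_sum fun j _ =>
          mul_le_mul_of_nonneg_right (hρc i j) (henn i j)
      have hsplit : ∑ i, ∑ j, c i j * (x' i j + e i j)
          = ∑ i, ∑ j, c i j * x' i j + ∑ i, ∑ j, c i j * e i j := by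
        rw [← Finset.sum_add_distrib]
        refine Finset.sum_congr rfl fun i _ => ?_
        rw [← Finset.sum_add_distrib]
        exact Finset.sum_congr rfl fun j _ => mul_add _ _ _
      have hsum_u : ∑ i, (u' i - ∑ j, e i j) = ∑ i, u' i - ∑ i, ∑ j, e i j :=
        Finset.sum_sub_distrib _ _
      rw [hsplit, hsum_u, mul_sub]
      linarith
  refine ⟨part1, part2, ?_⟩
  -- Part 3
  set S1 : Set ℝ := {v : ℝ | ∃ x u, Feas x u ∧
      (∀ a b, Feas a b → ∑ i, u i ≤ ∑ i, b i) ∧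
      v = ∑ i, ∑ j, c i j * x i j + ρ * ∑ i, u i} with hS1def
  set S2 : Set ℝ := {v : ℝ | ∃ x u, Feas x u ∧
      v = ∑ i, ∑ j, c i j * x i j + ρ * ∑ i, u i} with hS2def
  have hsub : S1 ⊆ S2 := by
    rintro v ⟨x, u, hf, _, hv⟩
    exact ⟨x, u, hf, hv⟩
  have hFeas0 : Feas (fun _ _ => 0) d := by
    rw [hFeas]
    exact ⟨fun _ _ => le_refl 0, hd, fun j => by simpa using hcapnn j,
      fun i => by simp⟩
  have hS2ne : S2.Nonempty := ⟨_, _, d, hFeas0, rfl⟩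
  obtain ⟨x₀, u₀, hfeas₀, _, hmin₀, _⟩ := part2 _ _ hFeas0
  have hS1ne : S1.Nonempty := ⟨_, x₀, u₀, hfeas₀, hmin₀, rfl⟩
  have hbdd2 : BddBelow S2 := by
    refine ⟨0, ?_⟩
    rintro v ⟨x, u, hf, rfl⟩
    rw [hFeas] at hf
    obtain ⟨hx, hu, _, _⟩ := hf
    have h1 : 0 ≤ ∑ i, ∑ j, c i j * x i j :=
      Finset.sum_nonneg fun i _ => Finset.sum_nonneg fun j _ =>
        mul_nonneg (hc i j) (hx i j)
    have h2 : 0 ≤ ρ * ∑ i, u i :=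
      mul_nonneg hρ.le (Finset.sum_nonneg fun i _ => hu i)
    linarith
  have hbdd1 : BddBelow S1 := hbdd2.mono hsub
  refine le_antisymm ?_ (csInf_le_csInf hbdd2 hS1ne hsub)
  refine le_csInf hS2ne ?_
  rintro v ⟨x', u', hf', rfl⟩
  obtain ⟨x, u, hfeas, _, hmin, hcost⟩ := part2 _ _ hf'
  exact le_trans (csInf_le hbdd1 ⟨x, u, hfeas, hmin, rfl⟩) hcost
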